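/- One-shot achievability for the point-to-point channel: Let q_X be a pmf on a finite set 𝒳 and q_{Y|X} a channel (stochastic map) from 𝒳 to a finite set 𝒴, and let M ≥ 1 be an integer. Then there exists an M-code, i.e. a stochastic encoder φ : [1:M] → 𝒳 and a stochastic decoder ψ : 𝒴 → [1:M], such that when the message M is uniform on [1:M], X is generated by φ from M, Y is generated by q_{Y|X} from X, and M̂ is generated by ψ from Y, the probability of correct decoding satisfies P(M̂ = M) ≥ E_{(X,Y) ~ q_X q_{Y|X}} [ 1 / (1 + (M − 1)·2^{−i_q(X;Y)}) ]. -/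

import Mathlib

open scoped BigOperators

/-- A pmf on a finite type, represented by a nonnegative real-valued function summing to 1. -/
structure FinPMF (α : Type) [Fintype α] where
  p : α → ℝ
  nonneg : ∀ a, 0 ≤ p a
  sum_eq_one : ∑ a, p a = 1

variable {𝓧 𝓨 : Type} [Fintype 𝓧] [Fintype 𝓨]

/-- Information density `i_q(x;y) = log₂ (q(x,y) / (q(x) q(y)))` for the joint pmf
`q(x,y) = qX(x) W(y|x)`. -/
noncomputable def iDens (qX : FinPMF 𝓧) (W : 𝓧 → FinPMF 𝓨) (x : 𝓧) (y : 𝓨) : ℝ :=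
  Real.logb 2 ((qX.p x * (W x).p y) / (qX.p x * ∑ x', qX.p x' * (W x').p y))

/-- Probability of correct decoding of an `M`-code `(enc, dec)` over channel `W`:
the message is uniform on `Fin M`, `X` is generated by the stochastic encoder,
`Y` by the channel, and `M̂` by the stochastic decoder. -/
noncomputable def pCorrect (M : ℕ) (W : 𝓧 → FinPMF 𝓨)
    (enc : Fin M → FinPMF 𝓧) (dec : 𝓨 → FinPMF (Fin M)) : ℝ :=
  ∑ m : Fin M, ∑ x : 𝓧, ∑ y : 𝓨,
    (1 / (M : ℝ)) * (enc m).p x * (W x).p y * (dec y).p m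

section Aux

variable [DecidableEq 𝓧]

/-- Point mass at `x`. -/
noncomputable def diracPMF (x : 𝓧) : FinPMF 𝓧 where
  p a := if a = x then 1 else 0
  nonneg a := by split <;> norm_num
  sum_eq_one := by simp

/-- The stochastic likelihood decoder for codebook `c`. -/
noncomputable def likDec (n : ℕ) (W : 𝓧 → FinPMF 𝓨) (c : Fin (n + 1) → 𝓧) (y : 𝓨) :
    FinPMF (Fin (n + 1)) where
  p m := if (∑ j, (W (c j)).p y) = 0 then ((n : ℝ) + 1)⁻¹
    else (W (c m)).p y / ∑ j, (W (c j)).p y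
  nonneg m := by
    split
    · positivity
    · exact div_nonneg ((W (c m)).nonneg y) (Finset.sum_nonneg fun _ _ => (W _).nonneg y)
  sum_eq_one := by
    by_cases h : (∑ j, (W (c j)).p y) = 0
    · simp only [h, if_true, Finset.sum_const, Finset.card_univ, Fintype.card_fin,
        nsmul_eq_mul]
      push_cast
      rw [mul_inv_cancel₀]
      positivity
    · simp only [h, if_false]
      rw [← Finset.sum_div, div_self h]

/-- Harmonic-mean inequality (Jensen for `x ↦ x⁻¹`), via Cauchy–Schwarz. -/
lemma inv_sum_le_sum_inv {ι : Type*} [Fintype ι] (w T : ι → ℝ)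
    (hw : ∀ i, 0 ≤ w i) (hw1 : ∑ i, w i = 1) (hT : ∀ i, 0 < T i) :
    (∑ i, w i * T i)⁻¹ ≤ ∑ i, w i * (T i)⁻¹ := by
  have hCS : (∑ i, w i) ^ 2 ≤ (∑ i, w i * T i) * ∑ i, w i * (T i)⁻¹ :=
    Finset.sum_sq_le_sum_mul_sum_of_sq_eq_mul Finset.univ
      (fun i _ => mul_nonneg (hw i) (hT i).le)
      (fun i _ => mul_nonneg (hw i) (inv_nonneg.mpr (hT i).le))
      (fun i _ => by
        rw [mul_mul_mul_comm, mul_inv_cancel₀ (hT i).ne', mul_one, sq])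
  rw [hw1, one_pow] at hCS
  have hpos : 0 < ∑ i, w i * T i := by
    by_contra h
    push_neg at h
    have hle : ∑ i, w i * T i ≤ 0 := h
    have hge : 0 ≤ ∑ i, w i * T i :=
      Finset.sum_nonneg fun i _ => mul_nonneg (hw i) (hT i).le
    have h0 : ∑ i, w i * T i = 0 := le_antisymm hle hge
    rw [h0, zero_mul] at hCS
    linarith
  rw [inv_le_iff_one_le_mul₀ hpos]
  linarith [hCS]

/-- Expected value of one channel-output factor over an i.i.d. codeword. -/
lemma exp_one_factor (qX : FinPMF 𝓧) (W : 𝓧 → FinPMF 𝓨) (n : ℕ) (y : 𝓨) (j : Fin n) :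
    ∑ r : Fin n → 𝓧, (∏ k, qX.p (r k)) * (W (r j)).p y
      = ∑ x', qX.p x' * (W x').p y := by
  have key : ∀ r : Fin n → 𝓧,
      (∏ k, qX.p (r k)) * (W (r j)).p y
        = ∏ k, (qX.p (r k) * if k = j then (W (r k)).p y else 1) := by
    intro r
    rw [Finset.prod_mul_distrib]
    congr 1
    rw [Finset.prod_ite_eq' Finset.univ j (fun k => (W (r k)).p y)]
    simp
  calc ∑ r : Fin n → 𝓧, (∏ k, qX.p (r k)) * (W (r j)).p y
      = ∑ r : Fin n → 𝓧, ∏ k, (qX.p (r k) * if k = j then (W (r k)).p y else 1) := by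
        exact Finset.sum_congr rfl fun r _ => key r
    _ = ∏ k : Fin n, ∑ x : 𝓧, (qX.p x * if k = j then (W x).p y else 1) := by
        rw [Finset.prod_univ_sum, Fintype.piFinset_univ]
    _ = ∏ k : Fin n, (if k = j then ∑ x', qX.p x' * (W x').p y else 1) := by
        refine Finset.prod_congr rfl fun k _ => ?_
        by_cases hk : k = j
        · simp [hk]
        · simp [hk, qX.sum_eq_one]
    _ = ∑ x', qX.p x' * (W x').p y := by
        rw [Finset.prod_ite_eq' Finset.univ j (fun _ => ∑ x', qX.p x' * (W x').p y)]
        simp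

/-- The total weight of the i.i.d. codebook distribution is 1. -/
lemma sum_prod_weight (qX : FinPMF 𝓧) (n : ℕ) :
    ∑ r : Fin n → 𝓧, (∏ k, qX.p (r k)) = 1 := by
  rw [← Fintype.piFinset_univ, ← Finset.prod_univ_sum]
  simp [qX.sum_eq_one]

/-- Key single-letter inequality for a fixed output `y` and message `m`. -/
lemma key_ineq (qX : FinPMF 𝓧) (W : 𝓧 → FinPMF 𝓨) (n : ℕ) (y : 𝓨) (m : Fin (n + 1)) :
    ∑ x, qX.p x * ((W x).p y) ^ 2 / ((W x).p y + n * ∑ x', qX.p x' * (W x').p y)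
      ≤ ∑ c : Fin (n + 1) → 𝓧,
          (∏ j, qX.p (c j)) * (((W (c m)).p y) ^ 2 / ∑ j, (W (c j)).p y) := by
  classical
  set qY : ℝ := ∑ x', qX.p x' * (W x').p y with hqY
  -- Step A: by symmetry we may replace `m` by `0`.
  have symm : ∑ c : Fin (n + 1) → 𝓧,
      (∏ j, qX.p (c j)) * (((W (c m)).p y) ^ 2 / ∑ j, (W (c j)).p y)
      = ∑ c : Fin (n + 1) → 𝓧,
      (∏ j, qX.p (c j)) * (((W (c 0)).p y) ^ 2 / ∑ j, (W (c j)).p y) := by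
    set σ : Equiv.Perm (Fin (n + 1)) := Equiv.swap 0 m with hσ
    refine (Fintype.sum_equiv (Equiv.arrowCongr σ (Equiv.refl 𝓧))
      _ _ fun c => ?_).symm
    have h1 : ∀ j, (Equiv.arrowCongr σ (Equiv.refl 𝓧)) c j = c (σ.symm j) := fun j => rfl
    have hprod : ∏ j, qX.p ((Equiv.arrowCongr σ (Equiv.refl 𝓧)) c j)
        = ∏ j, qX.p (c j) := by
      simp only [h1]
      exact Equiv.prod_comp σ.symm fun j => qX.p (c j)
    have hsum : ∑ j, (W ((Equiv.arrowCongr σ (Equiv.refl 𝓧)) c j)).p y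
        = ∑ j, (W (c j)).p y := by
      simp only [h1]
      exact Equiv.sum_comp σ.symm fun j => (W (c j)).p y
    have hm : (Equiv.arrowCongr σ (Equiv.refl 𝓧)) c m = c 0 := by
      rw [h1]
      congr 1
      rw [hσ]
      simp [Equiv.swap_apply_right]
    rw [hprod, hsum, hm]
  rw [symm]
  -- Step B: split the codebook as (first codeword, rest).
  have split : ∑ c : Fin (n + 1) → 𝓧,
      (∏ j, qX.p (c j)) * (((W (c 0)).p y) ^ 2 / ∑ j, (W (c j)).p y)
      = ∑ x : 𝓧, ∑ r : Fin n → 𝓧,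
        (qX.p x * ∏ j, qX.p (r j)) *
          (((W x).p y) ^ 2 / ((W x).p y + ∑ j, (W (r j)).p y)) := by
    rw [← Equiv.sum_comp (Fin.consEquiv fun _ => 𝓧)
      (fun c => (∏ j, qX.p (c j)) * (((W (c 0)).p y) ^ 2 / ∑ j, (W (c j)).p y)),
      Fintype.sum_prod_type]
    refine Finset.sum_congr rfl fun x _ => Finset.sum_congr rfl fun r _ => ?_
    have hc : (Fin.consEquiv fun _ => 𝓧) (x, r) = Fin.cons x r := rfl
    rw [hc, Fin.prod_univ_succ, Fin.sum_univ_succ, Fin.cons_zero]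
    simp [Fin.cons_succ]
  rw [split]
  -- Step C: per-x inequality.
  refine Finset.sum_le_sum fun x _ => ?_
  by_cases hx : qX.p x * ((W x).p y) ^ 2 = 0
  · have h1 : qX.p x * ((W x).p y) ^ 2 / ((W x).p y + n * qY) = 0 := by
      rw [hx, zero_div]
    rw [h1]
    refine Finset.sum_nonneg fun r _ => ?_
    have := (W x).nonneg y
    have := qX.nonneg x
    have h2 : 0 ≤ ∏ j, qX.p (r j) := Finset.prod_nonneg fun j _ => qX.nonneg (r j)
    have h3 : 0 ≤ ((W x).p y) ^ 2 / ((W x).p y + ∑ j, (W (r j)).p y) := by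
      apply div_nonneg (sq_nonneg _)
      have : 0 ≤ ∑ j, (W (r j)).p y := Finset.sum_nonneg fun j _ => (W _).nonneg y
      linarith
    exact mul_nonneg (mul_nonneg (qX.nonneg x) h2) h3
  · have hq : 0 < qX.p x := by
      rcases (qX.nonneg x).lt_or_eq with h | h
      · exact h
      · exact absurd (by rw [← h, zero_mul]) hx
    have hwpos : 0 < (W x).p y := by
      rcases ((W x).nonneg y).lt_or_eq with h | h
      · exact h
      · exact absurd (by rw [← h]; ring) hx
    set a : ℝ := (W x).p y with ha
    have hS : ∀ r : Fin n → 𝓧, 0 ≤ ∑ j, (W (r j)).p y :=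
      fun r => Finset.sum_nonneg fun j _ => (W _).nonneg y
    have hT : ∀ r : Fin n → 𝓧, 0 < a + ∑ j, (W (r j)).p y :=
      fun r => by have := hS r; linarith
    have hw : ∀ r : Fin n → 𝓧, 0 ≤ ∏ j, qX.p (r j) :=
      fun r => Finset.prod_nonneg fun j _ => qX.nonneg (r j)
    have hmean : ∑ r : Fin n → 𝓧, (∏ j, qX.p (r j)) * (a + ∑ j, (W (r j)).p y)
        = a + n * qY := by
      have : ∀ r : Fin n → 𝓧, (∏ j, qX.p (r j)) * (a + ∑ j, (W (r j)).p y)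
          = (∏ j, qX.p (r j)) * a + ∑ j, (∏ k, qX.p (r k)) * (W (r j)).p y := by
        intro r
        rw [mul_add, Finset.mul_sum]
      rw [Finset.sum_congr rfl fun r _ => this r, Finset.sum_add_distrib,
        ← Finset.sum_mul, sum_prod_weight qX n, one_mul, Finset.sum_comm]
      congr 1
      rw [Finset.sum_congr rfl fun j _ => exp_one_factor qX W n y j]
      simp [mul_comm]
      exact Or.inl hqY.symm
    have hjensen : (a + n * qY)⁻¹
        ≤ ∑ r : Fin n → 𝓧, (∏ j, qX.p (r j)) * (a + ∑ j, (W (r j)).p y)⁻¹ := by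
      rw [← hmean]
      exact inv_sum_le_sum_inv _ _ hw (sum_prod_weight qX n) hT
    calc qX.p x * a ^ 2 / (a + n * qY)
        = (qX.p x * a ^ 2) * (a + n * qY)⁻¹ := by rw [div_eq_mul_inv]
      _ ≤ (qX.p x * a ^ 2) *
          ∑ r : Fin n → 𝓧, (∏ j, qX.p (r j)) * (a + ∑ j, (W (r j)).p y)⁻¹ := by
          refine mul_le_mul_of_nonneg_left hjensen ?_
          positivity
      _ = ∑ r : Fin n → 𝓧, (qX.p x * ∏ j, qX.p (r j)) *
          (a ^ 2 / (a + ∑ j, (W (r j)).p y)) := by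
          rw [Finset.mul_sum]
          refine Finset.sum_congr rfl fun r _ => ?_
          rw [div_eq_mul_inv]
          ring

/-- `pCorrect` of the deterministic codebook `c` with the likelihood decoder. -/
lemma pCorrect_code (W : 𝓧 → FinPMF 𝓨) (n : ℕ) (c : Fin (n + 1) → 𝓧) :
    pCorrect (n + 1) W (fun m => diracPMF (c m)) (fun y => likDec n W c y)
      = (1 / ((n : ℝ) + 1)) * ∑ y, ∑ m, ((W (c m)).p y) ^ 2 / ∑ j, (W (c j)).p y := by
  unfold pCorrect
  have step1 : ∀ m : Fin (n + 1), ∑ x, ∑ y,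
      (1 / (((n + 1 : ℕ)) : ℝ)) * (diracPMF (c m)).p x * (W x).p y * (likDec n W c y).p m
      = ∑ y, (1 / ((n : ℝ) + 1)) * (((W (c m)).p y) ^ 2 / ∑ j, (W (c j)).p y) := by
    intro m
    rw [Finset.sum_comm]
    refine Finset.sum_congr rfl fun y _ => ?_
    have hcollapse : ∀ x, (1 / (((n + 1 : ℕ)) : ℝ)) * (diracPMF (c m)).p x * (W x).p y *
        (likDec n W c y).p m
        = if x = c m then (1 / ((n : ℝ) + 1)) * (W x).p y * (likDec n W c y).p m else 0 := by
      intro x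
      show (1 / (((n + 1 : ℕ)) : ℝ)) * (if x = c m then (1 : ℝ) else 0) * _ * _ = _
      split <;> push_cast <;> ring
    rw [Finset.sum_congr rfl fun x _ => hcollapse x,
      Finset.sum_ite_eq' Finset.univ (c m)
        (fun x => (1 / ((n : ℝ) + 1)) * (W x).p y * (likDec n W c y).p m)]
    simp only [Finset.mem_univ, if_true]
    by_cases hD : (∑ j, (W (c j)).p y) = 0
    · have hg : (W (c m)).p y = 0 :=
        (Finset.sum_eq_zero_iff_of_nonneg (fun j _ => (W (c j)).nonneg y)).mp hD m
          (Finset.mem_univ m)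
      rw [hg, hD]
      simp
    · have hdec : (likDec n W c y).p m = (W (c m)).p y / ∑ j, (W (c j)).p y := by
        simp [likDec, hD]
      rw [hdec, sq]
      ring
  rw [Finset.sum_congr rfl fun m _ => step1 m, Finset.sum_comm, Finset.mul_sum]
  refine Finset.sum_congr rfl fun y _ => ?_
  rw [Finset.mul_sum]

end Aux

/-- One-shot achievability for the point-to-point channel:
there is an `M`-code with
`P(M̂ = M) ≥ E_{q_X q_{Y|X}} [ 1 / (1 + (M-1) 2^{-i_q(X;Y)}) ]`. -/
theorem oneShot_point_to_point (qX : FinPMF 𝓧) (W : 𝓧 → FinPMF 𝓨)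
    (M : ℕ) (hM : 1 ≤ M) :
    ∃ (enc : Fin M → FinPMF 𝓧) (dec : 𝓨 → FinPMF (Fin M)),
      pCorrect M W enc dec ≥
        ∑ x : 𝓧, ∑ y : 𝓨, qX.p x * (W x).p y *
          (1 + ((M : ℝ) - 1) * (2 : ℝ) ^ (-(iDens qX W x y)))⁻¹ := by
  classical
  obtain ⟨n, rfl⟩ : ∃ n, M = n + 1 := ⟨M - 1, (Nat.succ_pred_eq_of_pos hM).symm⟩
  set qY : 𝓨 → ℝ := fun y => ∑ x', qX.p x' * (W x').p y with hqYdef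
  -- Rewrite the RHS in closed form.
  have hRHS : ∀ x y, qX.p x * (W x).p y *
      (1 + (((n + 1 : ℕ) : ℝ) - 1) * (2 : ℝ) ^ (-(iDens qX W x y)))⁻¹
      = qX.p x * ((W x).p y) ^ 2 / ((W x).p y + n * qY y) := by
    intro x y
    by_cases hx : qX.p x = 0
    · simp [hx]
    by_cases hw : (W x).p y = 0
    · simp [hw]
    have hq : 0 < qX.p x := (qX.nonneg x).lt_of_ne (Ne.symm hx)
    have hwp : 0 < (W x).p y := ((W x).nonneg y).lt_of_ne (Ne.symm hw)
    have hqY : 0 < qY y := by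
      refine lt_of_lt_of_le (mul_pos hq hwp) ?_
      exact Finset.single_le_sum
        (fun x' _ => mul_nonneg (qX.nonneg x') ((W x').nonneg y)) (Finset.mem_univ x)
    have hiden : iDens qX W x y = Real.logb 2 ((W x).p y / qY y) := by
      unfold iDens
      rw [mul_div_mul_left _ _ (ne_of_gt hq)]
    have h2 : (2 : ℝ) ^ (-(iDens qX W x y)) = qY y / (W x).p y := by
      rw [hiden, ← Real.logb_inv, inv_div]
      exact Real.rpow_logb (by norm_num) (by norm_num) (div_pos hqY hwp)
    rw [h2]
    have hcast : (((n + 1 : ℕ) : ℝ) - 1) = (n : ℝ) := by push_cast; ring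
    rw [hcast]
    have h1 : (1 + (n : ℝ) * (qY y / (W x).p y))
        = ((W x).p y + n * qY y) / (W x).p y := by
      field_simp
    have hden : 0 < (W x).p y + n * qY y := by positivity
    rw [h1, inv_div]
    rw [div_eq_mul_inv, div_eq_mul_inv]
    field_simp
  have hRHStot : (∑ x : 𝓧, ∑ y : 𝓨, qX.p x * (W x).p y *
      (1 + (((n + 1 : ℕ) : ℝ) - 1) * (2 : ℝ) ^ (-(iDens qX W x y)))⁻¹)
      = ∑ y : 𝓨, ∑ x : 𝓧, qX.p x * ((W x).p y) ^ 2 / ((W x).p y + n * qY y) := by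
    rw [Finset.sum_comm]
    exact Finset.sum_congr rfl fun y _ => Finset.sum_congr rfl fun x _ => hRHS x y
  set K : ℝ := ∑ y : 𝓨, ∑ x : 𝓧, qX.p x * ((W x).p y) ^ 2 / ((W x).p y + n * qY y)
    with hKdef
  set P : (Fin (n + 1) → 𝓧) → ℝ := fun c => ∏ j, qX.p (c j) with hPdef
  set G : (Fin (n + 1) → 𝓧) → ℝ := fun c =>
    pCorrect (n + 1) W (fun m => diracPMF (c m)) (fun y => likDec n W c y) with hGdef
  have hPnonneg : ∀ c, 0 ≤ P c := fun c => Finset.prod_nonneg fun j _ => qX.nonneg (c j)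
  have hPsum : ∑ c, P c = 1 := sum_prod_weight qX (n + 1)
  -- The averaged correct-decoding probability dominates K.
  have havg : K ≤ ∑ c, P c * G c := by
    have hG : ∀ c, G c = (1 / ((n : ℝ) + 1)) *
        ∑ y, ∑ m, ((W (c m)).p y) ^ 2 / ∑ j, (W (c j)).p y := fun c => pCorrect_code W n c
    calc K = (1 / ((n : ℝ) + 1)) * ∑ y : 𝓨, ∑ m : Fin (n + 1),
          ∑ x : 𝓧, qX.p x * ((W x).p y) ^ 2 / ((W x).p y + n * qY y) := by
          rw [hKdef]
          rw [Finset.mul_sum]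
          refine Finset.sum_congr rfl fun y _ => ?_
          rw [Finset.sum_const, Finset.card_univ, Fintype.card_fin, nsmul_eq_mul]
          rw [← mul_assoc]
          have : (1 / ((n : ℝ) + 1)) * ((n + 1 : ℕ) : ℝ) = 1 := by
            push_cast
            rw [one_div, inv_mul_cancel₀]
            positivity
          rw [this, one_mul]
      _ ≤ (1 / ((n : ℝ) + 1)) * ∑ y : 𝓨, ∑ m : Fin (n + 1),
          ∑ c, P c * (((W (c m)).p y) ^ 2 / ∑ j, (W (c j)).p y) := by
          have hpos : (0 : ℝ) ≤ 1 / ((n : ℝ) + 1) := by positivity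
          refine mul_le_mul_of_nonneg_left ?_ hpos
          refine Finset.sum_le_sum fun y _ => Finset.sum_le_sum fun m _ => ?_
          exact key_ineq qX W n y m
      _ = ∑ c, P c * G c := by
          have hterm : ∀ c : Fin (n + 1) → 𝓧, P c * G c = (1 / ((n : ℝ) + 1)) *
              ∑ y, ∑ m, P c * (((W (c m)).p y) ^ 2 / ∑ j, (W (c j)).p y) := by
            intro c
            rw [hG c, mul_left_comm]
            congr 1
            rw [Finset.mul_sum]
            exact Finset.sum_congr rfl fun y _ => Finset.mul_sum _ _ _
          rw [Finset.sum_congr rfl fun c _ => hterm c, ← Finset.mul_sum]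
          congr 1
          calc ∑ y : 𝓨, ∑ m : Fin (n + 1), ∑ c : Fin (n + 1) → 𝓧,
                P c * (((W (c m)).p y) ^ 2 / ∑ j, (W (c j)).p y)
              = ∑ y : 𝓨, ∑ c : Fin (n + 1) → 𝓧, ∑ m : Fin (n + 1),
                P c * (((W (c m)).p y) ^ 2 / ∑ j, (W (c j)).p y) :=
                Finset.sum_congr rfl fun y _ => Finset.sum_comm
            _ = ∑ c : Fin (n + 1) → 𝓧, ∑ y : 𝓨, ∑ m : Fin (n + 1),
                P c * (((W (c m)).p y) ^ 2 / ∑ j, (W (c j)).p y) := Finset.sum_comm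
  -- Extract a good codebook.
  have hexists : ∃ c, K ≤ G c := by
    by_contra h
    push_neg at h
    obtain ⟨c₀, _, hc₀⟩ := Finset.exists_ne_zero_of_sum_ne_zero
      (by rw [hPsum]; norm_num : ∑ c, P c ≠ 0)
    have hc₀pos : 0 < P c₀ := (hPnonneg c₀).lt_of_ne (Ne.symm hc₀)
    have hlt : ∑ c, P c * G c < ∑ c, P c * K := by
      refine Finset.sum_lt_sum (fun c _ => mul_le_mul_of_nonneg_left (h c).le (hPnonneg c))
        ⟨c₀, Finset.mem_univ c₀, mul_lt_mul_of_pos_left (h c₀) hc₀pos⟩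
    rw [← Finset.sum_mul, hPsum, one_mul] at hlt
    exact absurd havg (not_le.mpr hlt)
  obtain ⟨c, hc⟩ := hexists
  refine ⟨fun m => diracPMF (c m), fun y => likDec n W c y, ?_⟩
  rw [ge_iff_le, hRHStot]
  exact hc
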